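/- Under hypothesis (H), the function h defined by h(x) = 1 for |x| < M and h(x) = x²/Φ(x) for |x| ≥ M is nondecreasing on [M, ∞) and tends to +∞ as x → ∞. -/

import Mathlib

open Real Filter

theorem stmt14 (Φ : ℝ → ℝ) (ε M : ℝ)
    (hΦ : ContDiff ℝ 2 Φ) (hsym : ∀ x, Φ (-x) = Φ x)
    (hconv : ConvexOn ℝ Set.univ Φ)
    (hε : 0 < ε) (hε' : ε ≤ 1/2) (hM : 0 < M) (hΦM : 0 < Φ M)
    (hH : ∀ x ≥ M, (1 + ε) * Φ x ≤ x * deriv Φ x ∧ x * deriv Φ x ≤ (2 - ε) * Φ x)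
    (h : ℝ → ℝ)
    (hdef : ∀ x, h x = if |x| < M then 1 else x ^ 2 / Φ x) :
    MonotoneOn h (Set.Ici M) ∧ Tendsto h atTop atTop := by
  have hdiff : Differentiable ℝ Φ := hΦ.differentiable two_ne_zero
  -- positivity of Φ on [M, ∞)
  have hpos : ∀ x ≥ M, 0 < Φ x := by
    intro x hx
    rcases eq_or_lt_of_le hx with rfl | hx'
    · exact hΦM
    · have hs := hconv.slope_mono_adjacent (x := -M) (y := M) (z := x)
        (Set.mem_univ _) (Set.mem_univ _) (by linarith) hx'
      rw [hsym M, sub_self, zero_div] at hs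
      have := (le_div_iff₀ (by linarith : (0:ℝ) < x - M)).mp hs
      linarith
  -- h agrees with x^2/Φ x on [M, ∞)
  have heq : ∀ x ∈ Set.Ici M, h x = x ^ 2 / Φ x := by
    intro x hx
    rw [hdef x, if_neg]
    rw [not_lt, abs_of_pos (lt_of_lt_of_le hM hx)]
    exact hx
  -- monotonicity
  have hmono : MonotoneOn (fun x => x ^ 2 / Φ x) (Set.Ici M) := by
    apply monotoneOn_of_deriv_nonneg (convex_Ici M)
    · exact ContinuousOn.div (by fun_prop) hdiff.continuous.continuousOn
        fun x hx => (hpos x hx).ne'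
    · rw [interior_Ici]
      intro x hx
      exact ((differentiableAt_pow 2).div (hdiff x) (hpos x hx.le).ne').differentiableWithinAt
    · rw [interior_Ici]
      intro x hx
      have hx' : M ≤ x := hx.le
      have hΦx := hpos x hx'
      have hx0 : 0 < x := lt_of_lt_of_le hM hx'
      have hd : deriv (fun x => x ^ 2 / Φ x) x
          = (2 * x * Φ x - x ^ 2 * deriv Φ x) / (Φ x) ^ 2 := by
        rw [deriv_fun_div (differentiableAt_pow 2) (hdiff x) hΦx.ne']
        norm_num [deriv_pow]
      rw [hd]
      apply div_nonneg _ (by positivity)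
      have h2 := (hH x hx').2
      nlinarith [mul_le_mul_of_nonneg_left h2 hx0.le, mul_pos hx0 hΦx,
        mul_pos hε (mul_pos hx0 hΦx)]
  have hmonoh : MonotoneOn h (Set.Ici M) := fun a ha b hb hab => by
    rw [heq a ha, heq b hb]; exact hmono ha hb hab
  refine ⟨hmonoh, ?_⟩
  -- upper bound Φ x ≤ C x^(2-ε)
  have hanti : AntitoneOn (fun x => Φ x / x ^ (2 - ε : ℝ)) (Set.Ici M) := by
    apply antitoneOn_of_deriv_nonpos (convex_Ici M)
    · apply ContinuousOn.div hdiff.continuous.continuousOn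
      · intro x hx
        exact (Real.continuousAt_rpow_const x _ (Or.inl (lt_of_lt_of_le hM hx).ne')).continuousWithinAt
      · intro x hx
        exact (Real.rpow_pos_of_pos (lt_of_lt_of_le hM hx) _).ne'
    · rw [interior_Ici]
      intro x hx
      have hx0 : 0 < x := lt_trans hM hx
      exact ((hdiff x).div ((Real.hasDerivAt_rpow_const (Or.inl hx0.ne')).differentiableAt)
        (Real.rpow_pos_of_pos hx0 _).ne').differentiableWithinAt
    · rw [interior_Ici]
      intro x hx
      have hx' : M ≤ x := hx.le
      have hx0 : 0 < x := lt_trans hM hx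
      have hΦx := hpos x hx'
      have hA : (0:ℝ) < x ^ (2 - ε - 1 : ℝ) := Real.rpow_pos_of_pos hx0 _
      have hsplit : x ^ (2 - ε : ℝ) = x * x ^ (2 - ε - 1 : ℝ) := by
        have he : (2 - ε : ℝ) = 1 + (2 - ε - 1) := by ring
        rw [he, Real.rpow_add hx0, Real.rpow_one]
        norm_num
      have hd : deriv (fun x => Φ x / x ^ (2 - ε : ℝ)) x
          = (deriv Φ x * x ^ (2 - ε : ℝ) - Φ x * ((2 - ε) * x ^ (2 - ε - 1 : ℝ)))
            / (x ^ (2 - ε : ℝ)) ^ 2 := by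
        rw [deriv_fun_div (hdiff x) ((Real.hasDerivAt_rpow_const (Or.inl hx0.ne')).differentiableAt)
          (Real.rpow_pos_of_pos hx0 _).ne',
          (Real.hasDerivAt_rpow_const (Or.inl hx0.ne')).deriv]
      rw [hd]
      apply div_nonpos_of_nonpos_of_nonneg _ (by positivity)
      have h1 := (hH x hx').2
      rw [hsplit]
      nlinarith
  set C := Φ M / M ^ (2 - ε : ℝ) with hC
  have hC0 : 0 < C := div_pos hΦM (Real.rpow_pos_of_pos hM _)
  -- lower bound for h
  have hlb : ∀ x ≥ M, x ^ (ε : ℝ) / C ≤ h x := by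
    intro x hx
    have hx0 : 0 < x := lt_of_lt_of_le hM hx
    have hΦx := hpos x hx
    have hFx := hanti (Set.self_mem_Ici) hx hx
    have hxp : (0:ℝ) < x ^ (2 - ε : ℝ) := Real.rpow_pos_of_pos hx0 _
    have hub : Φ x ≤ C * x ^ (2 - ε : ℝ) := by
      rw [div_le_div_iff₀ hxp (Real.rpow_pos_of_pos hM _)] at hFx
      rw [hC, div_mul_eq_mul_div, le_div_iff₀ (Real.rpow_pos_of_pos hM _)]
      linarith
    rw [heq x (Set.mem_Ici.mpr hx)]
    have hx2 : (x : ℝ) ^ 2 = x ^ (ε : ℝ) * x ^ (2 - ε : ℝ) := by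
      have h2e : ε + (2 - ε) = ((2:ℕ):ℝ) := by push_cast; ring
      rw [← Real.rpow_add hx0, h2e, Real.rpow_natCast]
    calc x ^ (ε : ℝ) / C = x ^ 2 / (C * x ^ (2 - ε : ℝ)) := by
          rw [hx2, mul_div_mul_right _ _ hxp.ne']
      _ ≤ x ^ 2 / Φ x := by
          apply div_le_div_of_nonneg_left (by positivity) hΦx hub
  have htend : Tendsto (fun x : ℝ => x ^ (ε : ℝ) / C) atTop atTop :=
    (tendsto_rpow_atTop hε).atTop_div_const hC0
  exact tendsto_atTop_mono' atTop (eventually_atTop.mpr ⟨M, hlb⟩) htend
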